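/- arXiv:2307.04202 — 3 statements merged into one kernel-verified Lean document; each statement's English description precedes it below -/
import Mathlib

section
/- Let Q₃ : ℤ³ → ℤ be the quadratic form Q₃(a, b₁, b₂) = a² − b₁² − b₂². Let G be the subgroup of ℤ-linear automorphisms of ℤ³ generated by: the three maps negating one coordinate, the map interchanging the last two coordinates, and the reflection r(a, b₁, b₂) = (a + 2c, b₁ + 2c, b₂ + 2c) with c = a − b₁ − b₂. Then every element of G preserves Q₃, and for every α ∈ ℤ³ with Q₃(α) ≥ 0 there exists g ∈ G such that g(α) = (a, b₁, b₂) with b₁ ≥ b₂ ≥ 0 and a ≥ b₁ + b₂. -/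
/-- The intersection form of `CP² # 2CP̄²`. -/
def Q3 (v : Fin 3 → ℤ) : ℤ := v 0 ^ 2 - v 1 ^ 2 - v 2 ^ 2

/-- Negation of the `j`-th coordinate. -/
def neg3 (j : Fin 3) (v : Fin 3 → ℤ) : Fin 3 → ℤ := fun i => if i = j then -v i else v i

/-- Interchanging the last two coordinates. -/
def swap3 (v : Fin 3 → ℤ) : Fin 3 → ℤ := v ∘ Equiv.swap 1 2

/-- Reflection in the class `(1,1,1)`. -/
def r3 (v : Fin 3 → ℤ) : Fin 3 → ℤ :=
  ![v 0 + 2 * (v 0 - v 1 - v 2), v 1 + 2 * (v 0 - v 1 - v 2), v 2 + 2 * (v 0 - v 1 - v 2)]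

/-- The generating set: the three coordinate negations, the swap of the last two
coordinates, and the reflection `r3`, viewed as ℤ-linear automorphisms of `ℤ³`. -/
def gens3 : Set ((Fin 3 → ℤ) ≃ₗ[ℤ] (Fin 3 → ℤ)) :=
  {e | (∃ j, ⇑e = neg3 j) ∨ ⇑e = swap3 ∨ ⇑e = r3}

def negL (j : Fin 3) : (Fin 3 → ℤ) ≃ₗ[ℤ] (Fin 3 → ℤ) where
  toFun := neg3 j
  invFun := neg3 j
  map_add' x y := by funext i; simp only [neg3, Pi.add_apply]; split <;> ring
  map_smul' c x := by funext i; simp only [neg3, Pi.smul_apply, smul_eq_mul, RingHom.id_apply]; split <;> ring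
  left_inv x := by funext i; simp only [neg3]; split <;> ring
  right_inv x := by funext i; simp only [neg3]; split <;> ring

def swapL : (Fin 3 → ℤ) ≃ₗ[ℤ] (Fin 3 → ℤ) where
  toFun := swap3
  invFun := swap3
  map_add' x y := by funext i; simp [swap3, Equiv.swap_apply_def]
  map_smul' c x := by funext i; simp [swap3, Equiv.swap_apply_def]
  left_inv x := by funext i; fin_cases i <;> simp [swap3, Equiv.swap_apply_def]
  right_inv x := by funext i; fin_cases i <;> simp [swap3, Equiv.swap_apply_def]

def rL : (Fin 3 → ℤ) ≃ₗ[ℤ] (Fin 3 → ℤ) where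
  toFun := r3
  invFun := r3
  map_add' x y := by funext i; fin_cases i <;> simp [r3] <;> ring
  map_smul' c x := by funext i; fin_cases i <;> simp [r3] <;> ring
  left_inv x := by funext i; fin_cases i <;> simp [r3] <;> ring
  right_inv x := by funext i; fin_cases i <;> simp [r3] <;> ring

lemma negL_mem (j : Fin 3) : negL j ∈ Subgroup.closure gens3 :=
  Subgroup.subset_closure (Or.inl ⟨j, rfl⟩)

lemma swapL_mem : swapL ∈ Subgroup.closure gens3 :=
  Subgroup.subset_closure (Or.inr (Or.inl rfl))

lemma rL_mem : rL ∈ Subgroup.closure gens3 :=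
  Subgroup.subset_closure (Or.inr (Or.inr rfl))

lemma Q3_neg3 (j : Fin 3) (v : Fin 3 → ℤ) : Q3 (neg3 j v) = Q3 v := by
  fin_cases j <;> simp [Q3, neg3] <;> ring

lemma Q3_swap3 (v : Fin 3 → ℤ) : Q3 (swap3 v) = Q3 v := by
  simp [Q3, swap3, Equiv.swap_apply_def]; ring

lemma Q3_r3 (v : Fin 3 → ℤ) : Q3 (r3 v) = Q3 v := by
  simp [Q3, r3]; ring

def Norm3 (v : Fin 3 → ℤ) : Prop :=
  ∃ g ∈ Subgroup.closure gens3, g v 1 ≥ g v 2 ∧ g v 2 ≥ 0 ∧ g v 0 ≥ g v 1 + g v 2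

lemma norm_step (g : (Fin 3 → ℤ) ≃ₗ[ℤ] (Fin 3 → ℤ)) (hg : g ∈ Subgroup.closure gens3)
    {v : Fin 3 → ℤ} (h : Norm3 (g v)) : Norm3 v := by
  obtain ⟨g', hg', h1, h2, h3⟩ := h
  exact ⟨g' * g, mul_mem hg' hg, h1, h2, h3⟩

lemma main3 : ∀ n : ℕ, ∀ v : Fin 3 → ℤ, (v 0).natAbs ≤ n → 0 ≤ Q3 v → Norm3 v := by
  intro n
  induction n with
  | zero =>
    intro v h0 hQ
    have hv0 : v 0 = 0 := by omega
    have h1 : v 1 = 0 ∧ v 2 = 0 := by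
      unfold Q3 at hQ; constructor <;> nlinarith [sq_nonneg (v 1), sq_nonneg (v 2)]
    refine ⟨1, one_mem _, ?_⟩
    simp [hv0, h1.1, h1.2]
  | succ n ih =>
    have key : ∀ w : Fin 3 → ℤ, (w 0).natAbs ≤ n + 1 → 0 ≤ Q3 w →
        0 ≤ w 0 → w 2 ≤ w 1 → 0 ≤ w 2 → Norm3 w := by
      intro w hle hQ h0 h12 h2
      by_cases hbig : w 1 + w 2 ≤ w 0
      · exact ⟨1, one_mem _, by simpa using h12, by simpa using h2, by simpa using hbig⟩
      · push_neg at hbig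
        have hQ' : w 0 ^ 2 - w 1 ^ 2 - w 2 ^ 2 ≥ 0 := hQ
        have hlt : r3 w 0 < w 0 := by simp [r3]; linarith
        have hgt : -(w 0) < r3 w 0 := by
          simp [r3]
          nlinarith [sq_nonneg (w 1 - w 2), sq_nonneg (w 1 + w 2), sq_nonneg (w 0)]
        have hle' : (r3 w 0).natAbs ≤ n := by omega
        have := ih (r3 w) hle' (by rw [Q3_r3]; exact hQ)
        exact norm_step rL rL_mem this
    have key2 : ∀ w : Fin 3 → ℤ, (w 0).natAbs ≤ n + 1 → 0 ≤ Q3 w →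
        0 ≤ w 0 → 0 ≤ w 1 → 0 ≤ w 2 → Norm3 w := by
      intro w hle hQ h0 h1 h2
      rcases le_total (w 2) (w 1) with h | h
      · exact key w hle hQ h0 h h2
      · refine norm_step swapL swapL_mem ?_
        have e0 : swap3 w 0 = w 0 := by simp [swap3, Equiv.swap_apply_def]
        have e1 : swap3 w 1 = w 2 := by simp [swap3, Equiv.swap_apply_def]
        have e2 : swap3 w 2 = w 1 := by simp [swap3, Equiv.swap_apply_def]
        exact key (swap3 w) (by rw [e0]; exact hle) (by rw [Q3_swap3]; exact hQ)
          (by rw [e0]; exact h0) (by rw [e1, e2]; exact h) (by rw [e2]; exact h1)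
    have key3 : ∀ w : Fin 3 → ℤ, (w 0).natAbs ≤ n + 1 → 0 ≤ Q3 w →
        0 ≤ w 0 → 0 ≤ w 1 → Norm3 w := by
      intro w hle hQ h0 h1
      rcases le_total 0 (w 2) with h | h
      · exact key2 w hle hQ h0 h1 h
      · refine norm_step (negL 2) (negL_mem 2) ?_
        have e0 : neg3 2 w 0 = w 0 := by simp [neg3]
        have e1 : neg3 2 w 1 = w 1 := by simp [neg3]
        have e2 : neg3 2 w 2 = -w 2 := by simp [neg3]
        exact key2 (neg3 2 w) (by rw [e0]; exact hle) (by rw [Q3_neg3]; exact hQ)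
          (by rw [e0]; exact h0) (by rw [e1]; exact h1) (by rw [e2]; linarith)
    have key4 : ∀ w : Fin 3 → ℤ, (w 0).natAbs ≤ n + 1 → 0 ≤ Q3 w →
        0 ≤ w 0 → Norm3 w := by
      intro w hle hQ h0
      rcases le_total 0 (w 1) with h | h
      · exact key3 w hle hQ h0 h
      · refine norm_step (negL 1) (negL_mem 1) ?_
        have e0 : neg3 1 w 0 = w 0 := by simp [neg3]
        have e1 : neg3 1 w 1 = -w 1 := by simp [neg3]
        exact key3 (neg3 1 w) (by rw [e0]; exact hle) (by rw [Q3_neg3]; exact hQ)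
          (by rw [e0]; exact h0) (by rw [e1]; linarith)
    intro v hle hQ
    rcases le_total 0 (v 0) with h | h
    · exact key4 v hle hQ h
    · refine norm_step (negL 0) (negL_mem 0) ?_
      have e0 : neg3 0 v 0 = -v 0 := by simp [neg3]
      exact key4 (neg3 0 v) (by rw [e0]; omega) (by rw [Q3_neg3]; exact hQ)
        (by rw [e0]; linarith)

theorem normalization_CP2_2CP2bar :
    (∀ g ∈ Subgroup.closure gens3, ∀ α, Q3 (g α) = Q3 α) ∧
    (∀ α : Fin 3 → ℤ, 0 ≤ Q3 α → ∃ g ∈ Subgroup.closure gens3,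
      g α 1 ≥ g α 2 ∧ g α 2 ≥ 0 ∧ g α 0 ≥ g α 1 + g α 2) := by
  constructor
  · intro g hg
    induction hg using Subgroup.closure_induction with
    | mem e he =>
      rcases he with ⟨j, hj⟩ | he | he
      · intro α; rw [show ⇑e = neg3 j from hj]; exact Q3_neg3 j α
      · intro α; rw [show ⇑e = swap3 from he]; exact Q3_swap3 α
      · intro α; rw [show ⇑e = r3 from he]; exact Q3_r3 α
    | one => intro α; simp
    | mul a b _ _ ha hb => intro α; exact (ha (b α)).trans (hb α)
    | inv a _ ha =>
      intro α
      have h := ha (a⁻¹ α)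
      rw [show a ((a⁻¹ : (Fin 3 → ℤ) ≃ₗ[ℤ] (Fin 3 → ℤ)) α) = α from a.apply_symm_apply α] at h
      exact h.symm
  · intro α hQ
    exact main3 ((α 0).natAbs) α le_rfl hQ
end

section
/- Let Q₃ : ℤ³ → ℤ be the quadratic form Q₃(a, b₁, b₂) = a² − b₁² − b₂², and let G be the subgroup of ℤ-linear automorphisms of ℤ³ generated by the three coordinate-negation maps, the map interchanging the last two coordinates, and the reflection r(a, b₁, b₂) = (a + 2c, b₁ + 2c, b₂ + 2c) with c = a − b₁ − b₂. Then for every α ∈ ℤ³ with Q₃(α) = 0 there exist g ∈ G and an integer a ≥ 0 such that g(α) = (a, a, 0). -/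
def neg3L (j : Fin 3) : (Fin 3 → ℤ) →ₗ[ℤ] (Fin 3 → ℤ) where
  toFun := neg3 j
  map_add' x y := by funext i; simp only [neg3, Pi.add_apply]; split <;> ring
  map_smul' c x := by
    funext i; simp only [neg3, Pi.smul_apply, RingHom.id_apply, smul_eq_mul]; split <;> ring

def neg3E (j : Fin 3) : (Fin 3 → ℤ) ≃ₗ[ℤ] (Fin 3 → ℤ) :=
  LinearEquiv.ofLinear (neg3L j) (neg3L j)
    (LinearMap.ext fun v => funext fun i => by simp [neg3L, neg3]; split <;> simp)
    (LinearMap.ext fun v => funext fun i => by simp [neg3L, neg3]; split <;> simp)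

@[simp] lemma neg3E_apply (j : Fin 3) (v : Fin 3 → ℤ) : neg3E j v = neg3 j v := rfl

def swap3L : (Fin 3 → ℤ) →ₗ[ℤ] (Fin 3 → ℤ) where
  toFun := swap3
  map_add' x y := by funext i; simp [swap3]
  map_smul' c x := by funext i; simp [swap3]

def swap3E : (Fin 3 → ℤ) ≃ₗ[ℤ] (Fin 3 → ℤ) :=
  LinearEquiv.ofLinear swap3L swap3L
    (LinearMap.ext fun v => funext fun i => by fin_cases i <;> simp [swap3L, swap3])
    (LinearMap.ext fun v => funext fun i => by fin_cases i <;> simp [swap3L, swap3])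

@[simp] lemma swap3E_apply (v : Fin 3 → ℤ) : swap3E v = swap3 v := rfl

def r3L : (Fin 3 → ℤ) →ₗ[ℤ] (Fin 3 → ℤ) where
  toFun := r3
  map_add' x y := by funext i; fin_cases i <;> simp [r3] <;> ring
  map_smul' c x := by funext i; fin_cases i <;> simp [r3] <;> ring

def r3E : (Fin 3 → ℤ) ≃ₗ[ℤ] (Fin 3 → ℤ) :=
  LinearEquiv.ofLinear r3L r3L
    (LinearMap.ext fun v => funext fun i => by fin_cases i <;> simp [r3L, r3] <;> ring)
    (LinearMap.ext fun v => funext fun i => by fin_cases i <;> simp [r3L, r3] <;> ring)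

@[simp] lemma r3E_apply (v : Fin 3 → ℤ) : r3E v = r3 v := rfl

lemma neg3E_mem (j : Fin 3) : neg3E j ∈ Subgroup.closure gens3 :=
  Subgroup.subset_closure (Or.inl ⟨j, rfl⟩)
lemma swap3E_mem : swap3E ∈ Subgroup.closure gens3 :=
  Subgroup.subset_closure (Or.inr (Or.inl rfl))
lemma r3E_mem : r3E ∈ Subgroup.closure gens3 :=
  Subgroup.subset_closure (Or.inr (Or.inr rfl))

lemma mul_apply3 (g h : (Fin 3 → ℤ) ≃ₗ[ℤ] (Fin 3 → ℤ)) (v : Fin 3 → ℤ) :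
    (g * h) v = g (h v) := rfl

lemma abs_step (α : Fin 3 → ℤ) :
    ∃ g ∈ Subgroup.closure gens3, g α = fun i => |α i| := by
  refine ⟨(if α 0 < 0 then neg3E 0 else 1) * ((if α 1 < 0 then neg3E 1 else 1) *
      (if α 2 < 0 then neg3E 2 else 1)), ?_, ?_⟩
  · refine mul_mem ?_ (mul_mem ?_ ?_) <;> split <;>
      first | exact neg3E_mem _ | exact one_mem _
  · funext i
    simp only [mul_apply3]
    fin_cases i <;> split_ifs with h1 h2 h3 <;>
      simp_all [neg3, abs_of_neg, abs_of_nonneg, not_lt.mp]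

lemma swap_step (α : Fin 3 → ℤ) :
    ∃ g ∈ Subgroup.closure gens3,
      g α = ![α 0, max (α 1) (α 2), min (α 1) (α 2)] := by
  by_cases h : α 1 < α 2
  · refine ⟨swap3E, swap3E_mem, ?_⟩
    funext i
    fin_cases i <;>
      simp [swap3, Equiv.swap_apply_def, max_eq_right h.le, min_eq_left h.le]
  · refine ⟨1, one_mem _, ?_⟩
    funext i
    fin_cases i <;>
      simp [max_eq_left (le_of_not_gt h), min_eq_right (le_of_not_gt h)]

lemma normalize3 (α : Fin 3 → ℤ) :
    ∃ g ∈ Subgroup.closure gens3,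
      g α = ![|α 0|, max |α 1| |α 2|, min |α 1| |α 2|] := by
  obtain ⟨g1, hg1, h1⟩ := abs_step α
  obtain ⟨g2, hg2, h2⟩ := swap_step (g1 α)
  refine ⟨g2 * g1, mul_mem hg2 hg1, ?_⟩
  rw [h1] at h2
  rw [mul_apply3, h1]
  simpa using h2

lemma maxmin_sq (x y : ℤ) : max x y ^ 2 + min x y ^ 2 = x ^ 2 + y ^ 2 := by
  rcases le_total x y with h | h <;>
    simp [max_eq_right, max_eq_left, min_eq_left, min_eq_right, h] <;> ring

lemma main_aux : ∀ n : ℕ, ∀ α : Fin 3 → ℤ, (α 0).natAbs = n → Q3 α = 0 →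
    ∃ g ∈ Subgroup.closure gens3, ∃ a : ℤ, 0 ≤ a ∧ g α = ![a, a, 0] := by
  intro n
  induction n using Nat.strong_induction_on with
  | _ n ih =>
    intro α hn hQ
    obtain ⟨g1, hg1, h1⟩ := normalize3 α
    set b0 := |α 0| with hb0def
    set b1 := max |α 1| |α 2| with hb1def
    set b2 := min |α 1| |α 2| with hb2def
    have hQα : α 0 ^ 2 - α 1 ^ 2 - α 2 ^ 2 = 0 := hQ
    have e2 : b1 ^ 2 + b2 ^ 2 = α 1 ^ 2 + α 2 ^ 2 := by
      have := maxmin_sq |α 1| |α 2|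
      rwa [sq_abs, sq_abs] at this
    have hQβ : b0 ^ 2 - b1 ^ 2 - b2 ^ 2 = 0 := by
      rw [hb0def, sq_abs]; linarith
    have hb0 : 0 ≤ b0 := abs_nonneg _
    have hb2 : 0 ≤ b2 := le_min (abs_nonneg _) (abs_nonneg _)
    have hb21 : b2 ≤ b1 := min_le_max
    have hb1 : 0 ≤ b1 := hb2.trans hb21
    by_cases hz : b2 = 0
    · have hb01 : b0 = b1 := by
        rw [hz] at hQβ
        nlinarith [hQβ, hb0, hb1]
      refine ⟨g1, hg1, b0, hb0, ?_⟩
      rw [h1, hz, hb01]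
    · have hb2p : 0 < b2 := lt_of_le_of_ne hb2 (Ne.symm hz)
      have hb1p : 0 < b1 := lt_of_lt_of_le hb2p hb21
      have hb0p : 0 < b0 := by nlinarith [hQβ, mul_pos hb2p hb2p, sq_nonneg b1, hb0]
      set γ := r3 ![b0, b1, b2] with hγdef
      have hγ0 : γ 0 = 3 * b0 - 2 * b1 - 2 * b2 := by
        simp [hγdef, r3]; ring
      have hQγ : Q3 γ = 0 := by
        rw [hγdef, Q3_r3]
        show b0 ^ 2 - b1 ^ 2 - b2 ^ 2 = 0
        exact hQβ
      have hlt1 : b0 < b1 + b2 := by nlinarith [mul_pos hb1p hb2p, hb0]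
      have hlt2 : b1 + b2 < 2 * b0 := by nlinarith [sq_nonneg (b1 - b2), hb0p]
      have habs : |γ 0| < |α 0| := by
        rw [hγ0, ← hb0def, abs_lt]; constructor <;> linarith
      have hlt : (γ 0).natAbs < n := by
        rw [Int.abs_eq_natAbs, Int.abs_eq_natAbs] at habs
        rw [← hn]
        exact_mod_cast habs
      obtain ⟨g2, hg2, a, ha, hga⟩ := ih _ hlt γ rfl hQγ
      refine ⟨g2 * (r3E * g1), mul_mem hg2 (mul_mem r3E_mem hg1), a, ha, ?_⟩
      rw [mul_apply3, mul_apply3, h1, r3E_apply, ← hγdef]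
      exact hga


/-- Every class of square zero in the intersection lattice of `CP² # 2CP̄²` can be
moved by the group generated by the listed automorphisms to a class `(a, a, 0)`
with `a ≥ 0`. -/
theorem square_zero_class_normal_form :
    ∀ α : Fin 3 → ℤ, Q3 α = 0 → ∃ g ∈ Subgroup.closure gens3, ∃ a : ℤ,
      0 ≤ a ∧ g α = ![a, a, 0] := by
  intro α hQ
  exact main_aux _ α rfl hQ
end

section
/- Let Q₄ : ℤ⁴ → ℤ be the quadratic form Q₄(a, b₁, b₂, b₃) = a² − b₁² − b₂² − b₃², and let G be the subgroup of ℤ-linear automorphisms of ℤ⁴ generated by the four coordinate-negation maps, the maps permuting the last three coordinates, and the reflection r(a, b₁, b₂, b₃) = (a + c, b₁ + c, b₂ + c, b₃ + c) with c = a − b₁ − b₂ − b₃. Then for every α ∈ ℤ⁴ with Q₄(α) = 0 there exist g ∈ G and an integer a ≥ 0 such that g(α) = (a, a, 0, 0). -/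
/-- The intersection form of `CP² # 3CP̄²`. -/
def Q4 (v : Fin 4 → ℤ) : ℤ := v 0 ^ 2 - v 1 ^ 2 - v 2 ^ 2 - v 3 ^ 2

/-- Negation of the `j`-th coordinate. -/
def neg4 (j : Fin 4) (v : Fin 4 → ℤ) : Fin 4 → ℤ := fun i => if i = j then -v i else v i

/-- Reflection in the class `(1,1,1,1)`. -/
def r4 (v : Fin 4 → ℤ) : Fin 4 → ℤ :=
  ![v 0 + (v 0 - v 1 - v 2 - v 3), v 1 + (v 0 - v 1 - v 2 - v 3),
    v 2 + (v 0 - v 1 - v 2 - v 3), v 3 + (v 0 - v 1 - v 2 - v 3)]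

/-- The generating set: the four coordinate negations, the permutations of the last
three coordinates (permutations of `Fin 4` fixing `0`), and the reflection `r4`,
viewed as ℤ-linear automorphisms of `ℤ⁴`. -/
def gens4 : Set ((Fin 4 → ℤ) ≃ₗ[ℤ] (Fin 4 → ℤ)) :=
  {e | (∃ j, ⇑e = neg4 j) ∨ (∃ σ : Equiv.Perm (Fin 4), σ 0 = 0 ∧ ⇑e = fun v => v ∘ σ) ∨
    ⇑e = r4}

def negLE (j : Fin 4) : (Fin 4 → ℤ) ≃ₗ[ℤ] (Fin 4 → ℤ) where
  toFun := neg4 j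
  invFun := neg4 j
  map_add' x y := by funext i; simp only [neg4, Pi.add_apply]; split <;> ring
  map_smul' c x := by funext i; simp only [neg4, Pi.smul_apply, smul_eq_mul, RingHom.id_apply]; split <;> ring
  left_inv x := by funext i; simp only [neg4]; split <;> ring
  right_inv x := by funext i; simp only [neg4]; split <;> ring

def permLE (σ : Equiv.Perm (Fin 4)) : (Fin 4 → ℤ) ≃ₗ[ℤ] (Fin 4 → ℤ) where
  toFun v := v ∘ σ
  invFun v := v ∘ σ.symm
  map_add' x y := rfl
  map_smul' c x := rfl
  left_inv x := by funext i; simp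
  right_inv x := by funext i; simp

lemma r4_invol (v : Fin 4 → ℤ) : r4 (r4 v) = v := by
  funext i; fin_cases i <;> simp [r4] <;> ring

def rLE : (Fin 4 → ℤ) ≃ₗ[ℤ] (Fin 4 → ℤ) where
  toFun := r4
  invFun := r4
  map_add' x y := by funext i; fin_cases i <;> simp [r4] <;> ring
  map_smul' c x := by funext i; fin_cases i <;> simp [r4] <;> ring
  left_inv := r4_invol
  right_inv := r4_invol

lemma negLE_mem (j : Fin 4) : negLE j ∈ Subgroup.closure gens4 :=
  Subgroup.subset_closure (Or.inl ⟨j, rfl⟩)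

lemma permLE_mem (σ : Equiv.Perm (Fin 4)) (h : σ 0 = 0) : permLE σ ∈ Subgroup.closure gens4 :=
  Subgroup.subset_closure (Or.inr (Or.inl ⟨σ, h, rfl⟩))

lemma rLE_mem : rLE ∈ Subgroup.closure gens4 :=
  Subgroup.subset_closure (Or.inr (Or.inr rfl))

lemma mul_apply4 (e f : (Fin 4 → ℤ) ≃ₗ[ℤ] (Fin 4 → ℤ)) (v : Fin 4 → ℤ) :
    (e * f) v = e (f v) := rfl

-- arithmetic helpers
lemma sq_eq_of (a b : ℤ) (ha : 0 ≤ a) (hb : 0 ≤ b) (h : a ^ 2 = b ^ 2) : a = b := by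
  have h2 : (a - b) * (a + b) = 0 := by linear_combination h
  rcases mul_eq_zero.mp h2 with h' | h' <;> omega

lemma descent_bounds (a b1 b2 b3 : ℤ) (ha : 0 ≤ a) (h1 : 0 ≤ b1) (h2 : 0 ≤ b2)
    (h3 : 0 ≤ b3) (hq : a ^ 2 = b1 ^ 2 + b2 ^ 2 + b3 ^ 2)
    (hp : 0 < b1 * b2 + b1 * b3 + b2 * b3) :
    a < b1 + b2 + b3 ∧ b1 + b2 + b3 < 3 * a := by
  have hs : a < b1 + b2 + b3 := by nlinarith
  have ha0 : 0 < a := by nlinarith [sq_nonneg (b1 - b2), sq_nonneg (b1 - b3), sq_nonneg (b2 - b3), mul_nonneg ha ha]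
  refine ⟨hs, ?_⟩
  nlinarith [sq_nonneg (b1 - b2), sq_nonneg (b1 - b3), sq_nonneg (b2 - b3)]

lemma Q4_r4 (v : Fin 4 → ℤ) : Q4 (r4 v) = Q4 v := by
  simp [Q4, r4]; ring

noncomputable def E (v : Fin 4 → ℤ) (j : Fin 4) : (Fin 4 → ℤ) ≃ₗ[ℤ] (Fin 4 → ℤ) :=
  if v j < 0 then negLE j else 1

lemma negLE_apply (j : Fin 4) (u : Fin 4 → ℤ) : (negLE j) u = neg4 j u := rfl

lemma E_mem (v : Fin 4 → ℤ) (j : Fin 4) : E v j ∈ Subgroup.closure gens4 := by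
  unfold E; split
  · exact negLE_mem j
  · exact one_mem _

lemma E_apply (v u : Fin 4 → ℤ) (j i : Fin 4) :
    (E v j) u i = if i = j ∧ v j < 0 then -u i else u i := by
  unfold E
  by_cases h : v j < 0
  · simp [h, negLE_apply, neg4]
  · simp [h]

lemma E_apply_ne (v u : Fin 4 → ℤ) {j i : Fin 4} (h : i ≠ j) : (E v j) u i = u i := by
  rw [E_apply]; simp [h]

lemma E_apply_eq (v u : Fin 4 → ℤ) (j : Fin 4) (h : u j = v j) : (E v j) u j = |v j| := by
  rw [E_apply]
  simp only [true_and, if_pos rfl, h]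
  split_ifs with hv
  · rw [abs_of_neg hv]
  · rw [abs_of_nonneg (not_lt.mp hv)]

lemma normalize4 (v : Fin 4 → ℤ) :
    ∃ g ∈ Subgroup.closure gens4, ∀ i, g v i = |v i| := by
  refine ⟨E v 0 * E v 1 * E v 2 * E v 3,
    mul_mem (mul_mem (mul_mem (E_mem v 0) (E_mem v 1)) (E_mem v 2)) (E_mem v 3), ?_⟩
  have a30 : (E v 3) v 0 = v 0 := E_apply_ne v v (by decide)
  have a31 : (E v 3) v 1 = v 1 := E_apply_ne v v (by decide)
  have a32 : (E v 3) v 2 = v 2 := E_apply_ne v v (by decide)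
  have a33 : (E v 3) v 3 = |v 3| := E_apply_eq v v 3 rfl
  have a20 : (E v 2) ((E v 3) v) 0 = v 0 := by rw [E_apply_ne v _ (by decide), a30]
  have a21 : (E v 2) ((E v 3) v) 1 = v 1 := by rw [E_apply_ne v _ (by decide), a31]
  have a22 : (E v 2) ((E v 3) v) 2 = |v 2| := E_apply_eq v _ 2 a32
  have a23 : (E v 2) ((E v 3) v) 3 = |v 3| := by rw [E_apply_ne v _ (by decide), a33]
  have a10 : (E v 1) ((E v 2) ((E v 3) v)) 0 = v 0 := by
    rw [E_apply_ne v _ (by decide), a20]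
  have a11 : (E v 1) ((E v 2) ((E v 3) v)) 1 = |v 1| := E_apply_eq v _ 1 a21
  have a12 : (E v 1) ((E v 2) ((E v 3) v)) 2 = |v 2| := by
    rw [E_apply_ne v _ (by decide), a22]
  have a13 : (E v 1) ((E v 2) ((E v 3) v)) 3 = |v 3| := by
    rw [E_apply_ne v _ (by decide), a23]
  intro i
  have hc : (E v 0 * E v 1 * E v 2 * E v 3) v i
      = (E v 0) ((E v 1) ((E v 2) ((E v 3) v))) i := rfl
  rw [hc]
  rcases (by decide : ∀ k : Fin 4, k = 0 ∨ k = 1 ∨ k = 2 ∨ k = 3) i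
    with h | h | h | h <;> subst h
  · exact E_apply_eq v _ 0 a10
  · rw [E_apply_ne v _ (by decide), a11]
  · rw [E_apply_ne v _ (by decide), a12]
  · rw [E_apply_ne v _ (by decide), a13]

lemma ppos {x y z : ℤ} (hx : 0 ≤ x) (hy : 0 ≤ y) (hz : 0 ≤ z)
    (h : 0 < x * y ∨ 0 < x * z ∨ 0 < y * z) : 0 < x * y + x * z + y * z := by
  have nxy := mul_nonneg hx hy
  have nxz := mul_nonneg hx hz
  have nyz := mul_nonneg hy hz
  rcases h with h | h | h <;> linarith

lemma reach (w : Fin 4 → ℤ) (hq' : w 0 ^ 2 = w 1 ^ 2 + w 2 ^ 2 + w 3 ^ 2)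
    (hw0 : 0 ≤ w 0) (hw1 : 0 ≤ w 1) (h2 : w 2 = 0) (h3 : w 3 = 0) :
    w = ![w 0, w 0, 0, 0] := by
  have h10 : w 1 = w 0 := sq_eq_of _ _ hw1 hw0 (by rw [h2, h3] at hq'; linarith)
  funext i
  rcases (by decide : ∀ k : Fin 4, k = 0 ∨ k = 1 ∨ k = 2 ∨ k = 3) i
    with h | h | h | h <;> subst h <;> simp [h10, h2, h3]

lemma descent_step (n : ℕ)
    (ih : ∀ u : Fin 4 → ℤ, (u 0).natAbs ≤ n → Q4 u = 0 →
      ∃ g ∈ Subgroup.closure gens4, ∃ a : ℤ, 0 ≤ a ∧ g u = ![a, a, 0, 0])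
    (v : Fin 4 → ℤ) (g0 : (Fin 4 → ℤ) ≃ₗ[ℤ] (Fin 4 → ℤ))
    (hg0 : g0 ∈ Subgroup.closure gens4)
    (hw : ∀ i, g0 v i = |v i|) (hn : (v 0).natAbs ≤ n + 1)
    (hqw : Q4 (g0 v) = 0)
    (hp : 0 < g0 v 1 * g0 v 2 + g0 v 1 * g0 v 3 + g0 v 2 * g0 v 3) :
    ∃ g ∈ Subgroup.closure gens4, ∃ a : ℤ, 0 ≤ a ∧ g v = ![a, a, 0, 0] := by
  have hw0 : 0 ≤ g0 v 0 := by rw [hw 0]; exact abs_nonneg _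
  have hw1 : 0 ≤ g0 v 1 := by rw [hw 1]; exact abs_nonneg _
  have hw2 : 0 ≤ g0 v 2 := by rw [hw 2]; exact abs_nonneg _
  have hw3 : 0 ≤ g0 v 3 := by rw [hw 3]; exact abs_nonneg _
  have hq' : g0 v 0 ^ 2 = g0 v 1 ^ 2 + g0 v 2 ^ 2 + g0 v 3 ^ 2 := by
    unfold Q4 at hqw; linarith
  obtain ⟨hlt, hgt⟩ := descent_bounds _ _ _ _ hw0 hw1 hw2 hw3 hq' hp
  have e : (r4 (g0 v)) 0 = 2 * g0 v 0 - (g0 v 1 + g0 v 2 + g0 v 3) := by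
    show g0 v 0 + (g0 v 0 - g0 v 1 - g0 v 2 - g0 v 3) = _; ring
  have habs : g0 v 0 = ((v 0).natAbs : ℤ) := by rw [hw 0]; exact Int.abs_eq_natAbs _
  have key : ((r4 (g0 v)) 0).natAbs ≤ n := by omega
  have hqu : Q4 (r4 (g0 v)) = 0 := by rw [Q4_r4]; exact hqw
  obtain ⟨g, hg, a, ha, hga⟩ := ih (r4 (g0 v)) key hqu
  refine ⟨g * (rLE * g0), mul_mem hg (mul_mem rLE_mem hg0), a, ha, ?_⟩
  have hc : (g * (rLE * g0)) v = g (r4 (g0 v)) := rfl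
  rw [hc]; exact hga

lemma main4 : ∀ n : ℕ, ∀ v : Fin 4 → ℤ, (v 0).natAbs ≤ n → Q4 v = 0 →
    ∃ g ∈ Subgroup.closure gens4, ∃ a : ℤ, 0 ≤ a ∧ g v = ![a, a, 0, 0] := by
  intro n
  induction n with
  | zero =>
    intro v hn hq
    unfold Q4 at hq
    have h0 : v 0 = 0 := by omega
    have h1 : v 1 = 0 := by
      have : v 1 ^ 2 = 0 := by nlinarith [sq_nonneg (v 1), sq_nonneg (v 2), sq_nonneg (v 3)]
      exact pow_eq_zero_iff (by norm_num) |>.mp this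
    have h2 : v 2 = 0 := by
      have : v 2 ^ 2 = 0 := by nlinarith [sq_nonneg (v 1), sq_nonneg (v 2), sq_nonneg (v 3)]
      exact pow_eq_zero_iff (by norm_num) |>.mp this
    have h3 : v 3 = 0 := by
      have : v 3 ^ 2 = 0 := by nlinarith [sq_nonneg (v 1), sq_nonneg (v 2), sq_nonneg (v 3)]
      exact pow_eq_zero_iff (by norm_num) |>.mp this
    refine ⟨1, one_mem _, 0, le_refl _, ?_⟩
    show v = ![0, 0, 0, 0]
    funext i
    rcases (by decide : ∀ k : Fin 4, k = 0 ∨ k = 1 ∨ k = 2 ∨ k = 3) i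
      with h | h | h | h <;> subst h <;> simp [h0, h1, h2, h3]
  | succ n ih =>
    intro v hn hq
    obtain ⟨g0, hg0, hw⟩ := normalize4 v
    have hw0 : 0 ≤ g0 v 0 := by rw [hw 0]; exact abs_nonneg _
    have hw1 : 0 ≤ g0 v 1 := by rw [hw 1]; exact abs_nonneg _
    have hw2 : 0 ≤ g0 v 2 := by rw [hw 2]; exact abs_nonneg _
    have hw3 : 0 ≤ g0 v 3 := by rw [hw 3]; exact abs_nonneg _
    have hqw : Q4 (g0 v) = 0 := by
      unfold Q4 at hq ⊢
      rw [hw 0, hw 1, hw 2, hw 3, sq_abs, sq_abs, sq_abs, sq_abs]; exact hq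
    have hq' : g0 v 0 ^ 2 = g0 v 1 ^ 2 + g0 v 2 ^ 2 + g0 v 3 ^ 2 := by
      unfold Q4 at hqw; linarith
    by_cases h2 : g0 v 2 = 0
    · by_cases h3 : g0 v 3 = 0
      · -- done without permutation
        refine ⟨g0, hg0, g0 v 0, hw0, reach (g0 v) hq' hw0 hw1 h2 h3⟩
      · -- w 3 ≠ 0
        by_cases h1 : g0 v 1 = 0
        · -- only w 3 nonzero : swap 1 3
          set σ := Equiv.swap (1 : Fin 4) 3 with hσ
          refine ⟨permLE σ * g0, mul_mem (permLE_mem σ (by decide)) hg0, g0 v 0, hw0, ?_⟩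
          have hc : (permLE σ * g0) v = (g0 v) ∘ σ := rfl
          have c0 : ((g0 v) ∘ σ) 0 = g0 v 0 := congrArg (g0 v) (by decide)
          have c1 : ((g0 v) ∘ σ) 1 = g0 v 3 := congrArg (g0 v) (by decide)
          have c2 : ((g0 v) ∘ σ) 2 = g0 v 2 := congrArg (g0 v) (by decide)
          have c3 : ((g0 v) ∘ σ) 3 = g0 v 1 := congrArg (g0 v) (by decide)
          have hr := reach ((g0 v) ∘ σ) (by rw [c0, c1, c2, c3]; linarith)
            (by rw [c0]; exact hw0) (by rw [c1]; exact hw3)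
            (by rw [c2]; exact h2) (by rw [c3]; exact h1)
          rw [hc, hr, c0]
        · -- w 1 ≠ 0, w 3 ≠ 0 : descent
          exact descent_step n ih v g0 hg0 hw hn hqw
            (ppos hw1 hw2 hw3 (Or.inr (Or.inl (mul_pos
              (lt_of_le_of_ne hw1 (Ne.symm h1)) (lt_of_le_of_ne hw3 (Ne.symm h3))))))
    · by_cases h1 : g0 v 1 = 0
      · by_cases h3 : g0 v 3 = 0
        · -- only w 2 nonzero : swap 1 2
          set σ := Equiv.swap (1 : Fin 4) 2 with hσ
          refine ⟨permLE σ * g0, mul_mem (permLE_mem σ (by decide)) hg0, g0 v 0, hw0, ?_⟩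
          have hc : (permLE σ * g0) v = (g0 v) ∘ σ := rfl
          have c0 : ((g0 v) ∘ σ) 0 = g0 v 0 := congrArg (g0 v) (by decide)
          have c1 : ((g0 v) ∘ σ) 1 = g0 v 2 := congrArg (g0 v) (by decide)
          have c2 : ((g0 v) ∘ σ) 2 = g0 v 1 := congrArg (g0 v) (by decide)
          have c3 : ((g0 v) ∘ σ) 3 = g0 v 3 := congrArg (g0 v) (by decide)
          have hr := reach ((g0 v) ∘ σ) (by rw [c0, c1, c2, c3]; linarith)
            (by rw [c0]; exact hw0) (by rw [c1]; exact hw2)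
            (by rw [c2]; exact h1) (by rw [c3]; exact h3)
          rw [hc, hr, c0]
        · -- w 2 ≠ 0, w 3 ≠ 0 : descent
          exact descent_step n ih v g0 hg0 hw hn hqw
            (ppos hw1 hw2 hw3 (Or.inr (Or.inr (mul_pos
              (lt_of_le_of_ne hw2 (Ne.symm h2)) (lt_of_le_of_ne hw3 (Ne.symm h3))))))
      · -- w 1 ≠ 0, w 2 ≠ 0 : descent
        exact descent_step n ih v g0 hg0 hw hn hqw
          (ppos hw1 hw2 hw3 (Or.inl (mul_pos
            (lt_of_le_of_ne hw1 (Ne.symm h1)) (lt_of_le_of_ne hw2 (Ne.symm h2)))))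

/-- Every class of square zero in the intersection lattice of `CP² # 3CP̄²` can be
moved by the group generated by the listed automorphisms to a class `(a, a, 0, 0)`
with `a ≥ 0`. -/
theorem square_zero_class_normal_form_CP2_3CP2bar :
    ∀ α : Fin 4 → ℤ, Q4 α = 0 → ∃ g ∈ Subgroup.closure gens4, ∃ a : ℤ,
      0 ≤ a ∧ g α = ![a, a, 0, 0] := by
  intro α hα
  exact main4 (α 0).natAbs α le_rfl hα
end
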